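/- Let E, F and T be linear subspaces of ℝⁿ with T ∩ F⊥ = {0} and T ≠ {0}. Then ∠(E ∩ T⊥, F ∩ T⊥) ≤ 2·∠(E,F) / inf{ d(v, F⊥) : v ∈ T, |v| = 1 }. Equivalently, for every c > 0 such that d(v,F⊥) ≥ c for all unit vectors v ∈ T, one has c·∠(E ∩ T⊥, F ∩ T⊥) ≤ 2·∠(E,F). -/

import Mathlib

open Metric

open Submodule

/-- The (asymmetric) angle between two linear subspaces of a Euclidean space:
`∠(E,F) := sup { d(u,F) : u ∈ E, ‖u‖ ≤ 1 }`. -/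
noncomputable def subspaceAngle {n : ℕ} (E F : Submodule ℝ (EuclideanSpace ℝ (Fin n))) : ℝ :=
  sSup ((fun u => Metric.infDist u (F : Set (EuclideanSpace ℝ (Fin n)))) ''
    {u : EuclideanSpace ℝ (Fin n) | u ∈ E ∧ ‖u‖ ≤ 1})

section Aux

variable {n : ℕ}

local notation "Euc" => EuclideanSpace ℝ (Fin n)

/-- Distance to a subspace is realized by the orthogonal projection. -/
lemma norm_sub_proj_le {K : Submodule ℝ Euc} (y : Euc) (z : K) :
    ‖y - orthogonalProjection K y‖ ≤ ‖y - z‖ := by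
  rw [show ((orthogonalProjection K y : K) : Euc) = K.starProjection y from rfl, starProjection_minimal]
  exact ciInf_le ⟨0, by rintro _ ⟨x, rfl⟩; positivity⟩ z

lemma infDist_eq_norm_sub_proj (K : Submodule ℝ Euc) (y : Euc) :
    Metric.infDist y (K : Set Euc) = ‖y - orthogonalProjection K y‖ := by
  apply le_antisymm
  · have := Metric.infDist_le_dist_of_mem (x := y)
      (Submodule.coe_mem (orthogonalProjection K y))
    simpa [dist_eq_norm] using this
  · by_contra h
    push_neg at h
    obtain ⟨z, hz, hd⟩ := (Metric.infDist_lt_iff ⟨0, K.zero_mem⟩).mp h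
    rw [dist_eq_norm] at hd
    exact absurd hd (not_lt.mpr (norm_sub_proj_le y ⟨z, hz⟩))

/-- Norm of orthogonal projection is at most the norm. -/
lemma norm_proj_le (K : Submodule ℝ Euc) (x : Euc) :
    ‖(orthogonalProjection K x : Euc)‖ ≤ ‖x‖ := by
  have h := (orthogonalProjection K).le_opNorm x
  have h2 := orthogonalProjection_norm_le K
  calc ‖(orthogonalProjection K x : Euc)‖ = ‖orthogonalProjection K x‖ := rfl
    _ ≤ ‖orthogonalProjection K‖ * ‖x‖ := h
    _ ≤ 1 * ‖x‖ := by nlinarith [norm_nonneg x]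
    _ = ‖x‖ := one_mul _

/-- `⟪P_F x, x⟫ = ‖P_F x‖²`. -/
lemma inner_proj_self (K : Submodule ℝ Euc) (x : Euc) :
    @inner ℝ _ _ ((orthogonalProjection K x : Euc)) x
      = ‖(orthogonalProjection K x : Euc)‖ ^ 2 := by
  have h0 : @inner ℝ _ _ ((orthogonalProjection K x : Euc)) (x - orthogonalProjection K x) = 0 :=
    Submodule.inner_right_of_mem_orthogonal (Submodule.coe_mem _)
      (sub_starProjection_mem_orthogonal x)
  have : @inner ℝ _ _ ((orthogonalProjection K x : Euc)) x
      = @inner ℝ _ _ ((orthogonalProjection K x : Euc)) ((orthogonalProjection K x : Euc)) := by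
    rw [inner_sub_right] at h0; linarith
  rw [this, real_inner_self_eq_norm_sq]

/-- Key correction lemma: any `t ∈ T` is the `T`-projection of some `f ∈ F`
with `c * ‖f‖ ≤ ‖t‖`. -/
lemma exists_correction (F T : Submodule ℝ Euc) (hTF : T ⊓ Fᗮ = ⊥) (c : ℝ) (hc : 0 < c)
    (hlow' : ∀ s : Euc, s ∈ T → c * ‖s‖ ≤ ‖(orthogonalProjection F s : Euc)‖) :
    ∀ t : Euc, t ∈ T → ∃ f ∈ F, (orthogonalProjection T f : Euc) = t ∧ c * ‖f‖ ≤ ‖t‖ := by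
  set L : T →ₗ[ℝ] T :=
    (orthogonalProjection T).toLinearMap ∘ₗ F.subtype ∘ₗ
      (orthogonalProjection F).toLinearMap ∘ₗ T.subtype with hL
  have hLapp : ∀ s : T, L s = orthogonalProjection T ((orthogonalProjection F (s : Euc) : Euc)) :=
    fun s => rfl
  have hinj : Function.Injective L := by
    rw [← LinearMap.ker_eq_bot, LinearMap.ker_eq_bot']
    intro s hs
    rw [hLapp] at hs
    have hmem : ((orthogonalProjection F (s : Euc) : Euc)) ∈ Tᗮ :=
      orthogonalProjection_eq_zero_iff.mp hs
    have h0 : @inner ℝ _ _ ((orthogonalProjection F (s : Euc) : Euc)) (s : Euc) = 0 :=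
      Submodule.inner_left_of_mem_orthogonal s.2 hmem
    have h1 := inner_proj_self F (s : Euc)
    have h2 := hlow' (s : Euc) s.2
    have hPf0 : ‖((orthogonalProjection F (s : Euc) : Euc))‖ ^ 2 = 0 := by linarith
    have hPf : ‖((orthogonalProjection F (s : Euc) : Euc))‖ = 0 := by
      have := sq_abs ‖((orthogonalProjection F (s : Euc) : Euc))‖
      nlinarith [norm_nonneg ((orthogonalProjection F (s : Euc) : Euc))]
    rw [hPf] at h2
    have hle : ‖(s : Euc)‖ ≤ 0 := by nlinarith
    have : ‖(s : Euc)‖ = 0 := le_antisymm hle (norm_nonneg _)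
    ext1
    simpa using norm_eq_zero.mp this
  have hsurj : Function.Surjective L := LinearMap.injective_iff_surjective.mp hinj
  intro t ht
  obtain ⟨s, hs⟩ := hsurj ⟨t, ht⟩
  set f : Euc := (orthogonalProjection F (s : Euc) : Euc) with hf
  have hfF : f ∈ F := Submodule.coe_mem _
  have hPTf : (orthogonalProjection T f : Euc) = t := by
    have := congrArg (Subtype.val) hs
    simp [hLapp] at this
    exact this
  refine ⟨f, hfF, hPTf, ?_⟩
  -- ‖f‖² = ⟪f, s⟫ = ⟪P_T f, s⟫ = ⟪t, s⟫ ≤ ‖t‖‖s‖, and c‖s‖ ≤ ‖f‖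
  have h1 : @inner ℝ _ _ f (s : Euc) = ‖f‖ ^ 2 := inner_proj_self F (s : Euc)
  have h2 : @inner ℝ _ _ f (s : Euc) = @inner ℝ _ _ t (s : Euc) := by
    have horth : f - (orthogonalProjection T f : Euc) ∈ Tᗮ :=
      sub_starProjection_mem_orthogonal f
    have h0 : @inner ℝ _ _ (f - (orthogonalProjection T f : Euc)) (s : Euc) = 0 :=
      Submodule.inner_left_of_mem_orthogonal s.2 horth
    rw [inner_sub_left] at h0
    rw [hPTf] at h0
    linarith
  have h3 : @inner ℝ _ _ t (s : Euc) ≤ ‖t‖ * ‖(s : Euc)‖ := real_inner_le_norm t (s : Euc)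
  have h4 : c * ‖(s : Euc)‖ ≤ ‖f‖ := hlow' (s : Euc) s.2
  rcases eq_or_lt_of_le (norm_nonneg f) with hf0 | hfpos
  · rw [← hf0, mul_zero]; positivity
  · nlinarith [norm_nonneg t, norm_nonneg (s : Euc)]

end Aux

theorem angle_comparison {n : ℕ} (E F T : Submodule ℝ (EuclideanSpace ℝ (Fin n)))
    (hTF : T ⊓ Fᗮ = ⊥) (hT : T ≠ ⊥) (c : ℝ) (hc : 0 < c)
    (hlow : ∀ v ∈ T, ‖v‖ = 1 →
      c ≤ Metric.infDist v ((Fᗮ : Submodule ℝ (EuclideanSpace ℝ (Fin n))) : Set (EuclideanSpace ℝ (Fin n)))) :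
    c * subspaceAngle (E ⊓ Tᗮ) (F ⊓ Tᗮ) ≤ 2 * subspaceAngle E F := by
  classical
  -- distance to `Fᗮ` is the norm of the projection onto `F`
  have hproj : ∀ v : EuclideanSpace ℝ (Fin n),
      Metric.infDist v ((Fᗮ : Submodule ℝ (EuclideanSpace ℝ (Fin n))) : Set _)
        = ‖(orthogonalProjection F v : EuclideanSpace ℝ (Fin n))‖ := by
    intro v
    rw [infDist_eq_norm_sub_proj, orthogonalProjection_orthogonal]
    exact congrArg norm (sub_sub_cancel _ _)
  have hunit : ∀ s : EuclideanSpace ℝ (Fin n), s ≠ 0 → ‖(‖s‖⁻¹ • s)‖ = 1 := by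
    intro s hs0
    have hns : ‖s‖ ≠ 0 := norm_ne_zero_iff.mpr hs0
    rw [norm_smul, norm_inv, norm_norm, inv_mul_cancel₀ hns]
  have hlow' : ∀ s : EuclideanSpace ℝ (Fin n), s ∈ T →
      c * ‖s‖ ≤ ‖(orthogonalProjection F s : EuclideanSpace ℝ (Fin n))‖ := by
    intro s hsT
    rcases eq_or_ne s 0 with rfl | hs0
    · simp
    · have hns : 0 < ‖s‖ := norm_pos_iff.mpr hs0
      have h1 := hlow (‖s‖⁻¹ • s) (T.smul_mem _ hsT) (hunit s hs0)
      rw [hproj] at h1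
      have hmap : (orthogonalProjection F (‖s‖⁻¹ • s) : EuclideanSpace ℝ (Fin n))
          = ‖s‖⁻¹ • (orthogonalProjection F s : EuclideanSpace ℝ (Fin n)) := by
        rw [map_smul]; rfl
      rw [hmap, norm_smul, norm_inv, norm_norm] at h1
      calc c * ‖s‖
          ≤ (‖s‖⁻¹ * ‖(orthogonalProjection F s : EuclideanSpace ℝ (Fin n))‖) * ‖s‖ :=
            mul_le_mul_of_nonneg_right h1 hns.le
        _ = ‖(orthogonalProjection F s : EuclideanSpace ℝ (Fin n))‖ := by
            field_simp
  -- c ≤ 1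
  obtain ⟨v0, hv0T, hv00⟩ := Submodule.exists_mem_ne_zero_of_ne_bot hT
  have hc1 : c ≤ 1 := by
    have h1 := hlow (‖v0‖⁻¹ • v0) (T.smul_mem _ hv0T) (hunit v0 hv00)
    have h2 : Metric.infDist (‖v0‖⁻¹ • v0)
        ((Fᗮ : Submodule ℝ (EuclideanSpace ℝ (Fin n))) : Set _) ≤ 1 := by
      have := Metric.infDist_le_dist_of_mem (x := ‖v0‖⁻¹ • v0) Fᗮ.zero_mem
      rw [dist_zero_right] at this
      rw [hunit v0 hv00] at this
      exact this
    linarith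
  set α := subspaceAngle E F with hα
  have hbdd : BddAbove ((fun u => Metric.infDist u (F : Set (EuclideanSpace ℝ (Fin n)))) ''
      {u : EuclideanSpace ℝ (Fin n) | u ∈ E ∧ ‖u‖ ≤ 1}) := by
    refine ⟨1, ?_⟩
    rintro x ⟨u, ⟨huE, hu1⟩, rfl⟩
    have := Metric.infDist_le_dist_of_mem (x := u) F.zero_mem
    rw [dist_zero_right] at this
    exact this.trans hu1
  have hα0 : 0 ≤ α := by
    refine le_csSup hbdd ⟨0, ⟨E.zero_mem, by simp⟩, ?_⟩
    simp [Metric.infDist_zero_of_mem F.zero_mem]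
  have hmem_le : ∀ u : EuclideanSpace ℝ (Fin n), u ∈ E → ‖u‖ ≤ 1 →
      Metric.infDist u (F : Set (EuclideanSpace ℝ (Fin n))) ≤ α :=
    fun u h1 h2 => le_csSup hbdd ⟨u, ⟨h1, h2⟩, rfl⟩
  -- key pointwise bound
  have key : ∀ u : EuclideanSpace ℝ (Fin n), u ∈ E ⊓ Tᗮ → ‖u‖ ≤ 1 →
      Metric.infDist u ((F ⊓ Tᗮ : Submodule ℝ (EuclideanSpace ℝ (Fin n))) : Set _)
        ≤ 2 * α / c := by
    intro u huET hu1
    obtain ⟨huE, huT⟩ := Submodule.mem_inf.mp huET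
    set w : EuclideanSpace ℝ (Fin n) := (orthogonalProjection F u : EuclideanSpace ℝ (Fin n))
      with hwdef
    have hw : ‖u - w‖ ≤ α := by
      rw [← infDist_eq_norm_sub_proj]
      exact hmem_le u huE hu1
    set t : EuclideanSpace ℝ (Fin n) := (orthogonalProjection T w : EuclideanSpace ℝ (Fin n))
      with htdef
    have htT : t ∈ T := Submodule.coe_mem _
    have hPTu : (orthogonalProjection T u : EuclideanSpace ℝ (Fin n)) = 0 := by
      have : orthogonalProjection T u = 0 := orthogonalProjection_eq_zero_iff.mpr huT
      rw [this]; rfl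
    have hnt : ‖t‖ ≤ ‖u - w‖ := by
      have hsub : (orthogonalProjection T (u - w) : EuclideanSpace ℝ (Fin n)) = -t := by
        rw [map_sub]
        push_cast
        rw [hPTu, ← htdef, zero_sub]
      have := norm_proj_le T (u - w)
      rw [hsub, norm_neg] at this
      exact this
    obtain ⟨f, hfF, hPTf, hcf⟩ := exists_correction F T hTF c hc hlow' t htT
    have hwfmem : w - f ∈ F ⊓ Tᗮ := by
      refine Submodule.mem_inf.mpr ⟨F.sub_mem (Submodule.coe_mem _) hfF, ?_⟩
      have : orthogonalProjection T (w - f) = 0 := by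
        ext
        push_cast [map_sub]
        rw [hPTf, ← htdef, sub_self]
      exact orthogonalProjection_eq_zero_iff.mp this
    have hd : Metric.infDist u ((F ⊓ Tᗮ : Submodule ℝ (EuclideanSpace ℝ (Fin n))) : Set _)
        ≤ ‖u - (w - f)‖ := by
      have := Metric.infDist_le_dist_of_mem (x := u) hwfmem
      rwa [dist_eq_norm] at this
    have htri : ‖u - (w - f)‖ ≤ ‖u - w‖ + ‖f‖ := by
      have h : u - (w - f) = (u - w) + f := by abel
      rw [h]; exact norm_add_le _ _
    have hfα : ‖f‖ ≤ α / c := by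
      rw [le_div_iff₀ hc]
      have : c * ‖f‖ ≤ α := hcf.trans (hnt.trans hw)
      linarith
    have hαc : α ≤ α / c := by
      rw [le_div_iff₀ hc]
      nlinarith
    have h2αc : 2 * α / c = α / c + α / c := by ring
    calc Metric.infDist u ((F ⊓ Tᗮ : Submodule ℝ (EuclideanSpace ℝ (Fin n))) : Set _)
        ≤ ‖u - (w - f)‖ := hd
      _ ≤ ‖u - w‖ + ‖f‖ := htri
      _ ≤ α + α / c := add_le_add hw hfα
      _ ≤ α / c + α / c := by linarith
      _ = 2 * α / c := by ring
  rw [mul_comm, ← le_div_iff₀ hc]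
  apply Real.sSup_le
  · rintro x ⟨u, ⟨hu1, hu2⟩, rfl⟩
    exact key u hu1 hu2
  · positivity
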